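/- Let d be a positive integer, C > 0, α ∈ ℝ, and let s ∈ ℝ satisfy s < d(α − 1/2). Let (c_j)_{j≥1} be real numbers with |c_j| ≤ C j^{−α} for all j ≥ 1, let (λ_j)_{j≥1} be nonnegative reals such that λ_j / j^{2/d} converges to some κ > 0 as j → ∞, and let (ζ_j)_{j≥1} be independent standard real Gaussian random variables. Then almost surely the series Σ_{j≥1} c_j² ζ_j² (1 + λ_j)^s converges. -/

import Mathlib

open MeasureTheory ProbabilityTheory Filter Real
open scoped ENNReal NNReal

-- gaussian second moment lintegral is finite
lemma gauss_sq_lt_top : ∫⁻ x, ENNReal.ofReal (x ^ 2) ∂(gaussianReal 0 1) < ⊤ := by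
  rw [gaussianReal_of_var_ne_zero 0 one_ne_zero,
    lintegral_withDensity_eq_lintegral_mul _ (measurable_gaussianPDF 0 1)
      (by measurability)]
  have h : ∀ x : ℝ, gaussianPDF 0 1 x * (ENNReal.ofReal (x ^ 2))
      = ENNReal.ofReal (x ^ 2 * gaussianPDFReal 0 1 x) := by
    intro x
    rw [gaussianPDF, ← ENNReal.ofReal_mul (gaussianPDFReal_nonneg 0 1 x), mul_comm]
  simp only [Pi.mul_apply, h]
  apply Integrable.lintegral_lt_top
  have hint := (integrable_rpow_mul_exp_neg_mul_sq (b := 1/2) (by norm_num)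
      (s := 2) (by norm_num)).const_mul ((Real.sqrt (2 * π * ((1:NNReal):ℝ)))⁻¹)
  refine hint.congr (Filter.Eventually.of_forall fun x => ?_)
  simp only [gaussianPDFReal]
  rw [show (x : ℝ) ^ (2:ℝ) = x ^ 2 from Real.rpow_natCast x 2]
  push_cast
  ring_nf

lemma aux_summable (d : ℕ) (hd : 0 < d) (C : ℝ) (hC : 0 < C) (α s : ℝ)
    (hs : s < d * (α - 1 / 2))
    (c : ℕ → ℝ) (hc : ∀ j : ℕ, 1 ≤ j → |c j| ≤ C * (j : ℝ) ^ (-α))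
    (lam : ℕ → ℝ) (hlam : ∀ j, 0 ≤ lam j) (κ : ℝ) (hκ : 0 < κ)
    (hweyl : Tendsto (fun j : ℕ => lam j / (j : ℝ) ^ (2 / (d : ℝ))) atTop (nhds κ)) :
    Summable (fun j : ℕ => (c j) ^ 2 * (1 + lam j) ^ s) := by
  have hd' : (0:ℝ) < d := Nat.cast_pos.mpr hd
  set p : ℝ := 2 * α - 2 * (s / d) with hp_def
  have hp1 : 1 < p := by
    have h1 : s / d < α - 1/2 := (div_lt_iff₀ hd').mpr (by linarith [hs])
    rw [hp_def]; linarith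
  have hsum : Summable (fun j : ℕ => (j:ℝ) ^ (-p)) :=
    Real.summable_nat_rpow.mpr (by linarith)
  apply summable_of_isBigO_nat hsum
  set K : ℝ := max ((1 + 3 * κ / 2) ^ s) ((κ/2) ^ s) with hK_def
  have hK0 : 0 < K := lt_of_lt_of_le (Real.rpow_pos_of_pos (by linarith) s) (le_max_right _ _)
  rw [Asymptotics.isBigO_iff]
  refine ⟨C^2 * K, ?_⟩
  have hev : ∀ᶠ j : ℕ in atTop,
      lam j / (j:ℝ) ^ (2/(d:ℝ)) ∈ Set.Ioo (κ/2) (3*κ/2) :=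
    hweyl (Ioo_mem_nhds (by linarith) (by linarith))
  filter_upwards [hev, eventually_ge_atTop 1] with j hj hj1
  set t : ℝ := (j:ℝ) ^ (2/(d:ℝ)) with ht_def
  have hjR : (1:ℝ) ≤ (j:ℝ) := by exact_mod_cast hj1
  have hjpos : (0:ℝ) < (j:ℝ) := by linarith
  have ht1 : 1 ≤ t := Real.one_le_rpow hjR (by positivity)
  have ht0 : (0:ℝ) < t := by linarith
  have hlow : κ/2 * t < lam j := (lt_div_iff₀ ht0).mp hj.1
  have hup : 1 + lam j ≤ (1 + 3*κ/2) * t := by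
    have h2 : lam j < 3*κ/2 * t := (div_lt_iff₀ ht0).mp hj.2
    nlinarith
  have hpos : (0:ℝ) < 1 + lam j := by linarith [hlam j]
  have hts : t ^ s = (j:ℝ) ^ (2/(d:ℝ) * s) := (Real.rpow_mul (le_of_lt hjpos) _ _).symm
  have hts0 : (0:ℝ) ≤ t ^ s := Real.rpow_nonneg ht0.le s
  have hbound : (1 + lam j) ^ s ≤ K * t ^ s := by
    rcases le_or_gt 0 s with hs0 | hs0
    · calc (1+lam j)^s ≤ ((1+3*κ/2)*t)^s := Real.rpow_le_rpow hpos.le hup hs0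
        _ = (1+3*κ/2)^s * t^s := Real.mul_rpow (by linarith) ht0.le
        _ ≤ K * t^s := mul_le_mul_of_nonneg_right (le_max_left _ _) hts0
    · calc (1+lam j)^s ≤ (κ/2*t)^s :=
          Real.rpow_le_rpow_of_nonpos (by positivity) (by linarith) hs0.le
        _ = (κ/2)^s * t^s := Real.mul_rpow (by positivity) ht0.le
        _ ≤ K * t^s := mul_le_mul_of_nonneg_right (le_max_right _ _) hts0
  have hcb : (c j)^2 ≤ C^2 * (j:ℝ) ^ (-(2*α)) := by
    have h1 : |c j| ≤ C * (j:ℝ) ^ (-α) := hc j hj1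
    have h2 : (c j)^2 = |c j|^2 := (sq_abs _).symm
    have h3 : |c j|^2 ≤ (C * (j:ℝ) ^ (-α))^2 :=
      pow_le_pow_left₀ (abs_nonneg _) h1 2
    have h4 : (C * (j:ℝ) ^ (-α))^2 = C^2 * ((j:ℝ) ^ (-α))^2 := by ring
    have h5 : ((j:ℝ) ^ (-α))^2 = (j:ℝ) ^ (-(2*α)) := by
      rw [← Real.rpow_natCast ((j:ℝ) ^ (-α)) 2, ← Real.rpow_mul hjpos.le]
      norm_num; ring_nf
    rw [h2]; rw [h4, h5] at h3; exact h3
  have hexp : (j:ℝ) ^ (-(2*α)) * (j:ℝ) ^ (2/(d:ℝ) * s) = (j:ℝ) ^ (-p) := by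
    rw [← Real.rpow_add hjpos, hp_def]
    congr 1
    field_simp
    ring
  have hfinal : (c j)^2 * (1 + lam j)^s ≤ C^2 * K * (j:ℝ) ^ (-p) := by
    calc (c j)^2 * (1 + lam j)^s
        ≤ (C^2 * (j:ℝ) ^ (-(2*α))) * (K * t^s) := by
          apply mul_le_mul hcb hbound (Real.rpow_nonneg hpos.le s)
          positivity
      _ = C^2 * K * ((j:ℝ) ^ (-(2*α)) * (j:ℝ) ^ (2/(d:ℝ) * s)) := by rw [hts]; ring
      _ = C^2 * K * (j:ℝ) ^ (-p) := by rw [hexp]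
  have hnn : 0 ≤ (c j)^2 * (1 + lam j)^s :=
    mul_nonneg (sq_nonneg _) (Real.rpow_nonneg hpos.le s)
  rw [Real.norm_eq_abs, Real.norm_eq_abs, abs_of_nonneg hnn,
    abs_of_nonneg (Real.rpow_nonneg hjpos.le _)]
  exact hfinal


/-- If `|c_j| ≤ C j^{-α}`, `λ_j ∼ κ j^{2/d}` (Weyl's law), and `(ζ_j)` are i.i.d. standard
Gaussians, then for `s < d(α - 1/2)`, almost surely the series
`Σ_j c_j² ζ_j² (1 + λ_j)^s` converges. -/
theorem stmt_1 {Ω : Type*} [MeasurableSpace Ω] (μ : Measure Ω) [IsProbabilityMeasure μ]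
    (d : ℕ) (hd : 0 < d) (C : ℝ) (hC : 0 < C) (α s : ℝ)
    (hs : s < d * (α - 1 / 2))
    (c : ℕ → ℝ) (hc : ∀ j : ℕ, 1 ≤ j → |c j| ≤ C * (j : ℝ) ^ (-α))
    (lam : ℕ → ℝ) (hlam : ∀ j, 0 ≤ lam j) (κ : ℝ) (hκ : 0 < κ)
    (hweyl : Tendsto (fun j : ℕ => lam j / (j : ℝ) ^ (2 / (d : ℝ))) atTop (nhds κ))
    (ζ : ℕ → Ω → ℝ)
    (hmeas : ∀ j, Measurable (ζ j))
    (hindep : iIndepFun ζ μ)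
    (hdist : ∀ j, μ.map (ζ j) = gaussianReal 0 1) :
    ∀ᵐ ω ∂μ, Summable (fun j : ℕ => (c j) ^ 2 * (ζ j ω) ^ 2 * (1 + lam j) ^ s) := by
  set V : ℝ≥0∞ := ∫⁻ x, ENNReal.ofReal (x ^ 2) ∂(gaussianReal 0 1) with hV_def
  have hVlt : V < ⊤ := gauss_sq_lt_top
  set a : ℕ → ℝ := fun j => (c j)^2 * (1 + lam j)^s with ha_def
  have hposl : ∀ j, (0:ℝ) < 1 + lam j := fun j => by linarith [hlam j]
  have ha0 : ∀ j, 0 ≤ a j := fun j =>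
    mul_nonneg (sq_nonneg _) (Real.rpow_nonneg (hposl j).le s)
  have hA : Summable a := aux_summable d hd C hC α s hs c hc lam hlam κ hκ hweyl
  set F : ℕ → Ω → ℝ≥0∞ := fun j ω => ENNReal.ofReal ((c j)^2 * (ζ j ω)^2 * (1 + lam j)^s)
    with hF_def
  have hFeq : ∀ j ω, F j ω = ENNReal.ofReal (a j) * ENNReal.ofReal ((ζ j ω)^2) := by
    intro j ω
    rw [hF_def, ha_def]
    simp only
    rw [← ENNReal.ofReal_mul (ha0 j)]
    congr 1
    ring
  have hFmeas : ∀ j, Measurable (F j) := by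
    intro j
    apply Measurable.ennreal_ofReal
    exact (measurable_const.mul (((hmeas j).pow_const 2))).mul measurable_const
  have hlin : ∀ j, ∫⁻ ω, F j ω ∂μ = ENNReal.ofReal (a j) * V := by
    intro j
    simp_rw [hFeq]
    rw [lintegral_const_mul _ (((hmeas j).pow_const 2).ennreal_ofReal)]
    congr 1
    rw [hV_def, ← hdist j]
    exact (lintegral_map ((measurable_id.pow_const 2).ennreal_ofReal) (hmeas j)).symm
  have hsumlin : ∑' j, ∫⁻ ω, F j ω ∂μ < ⊤ := by
    simp_rw [hlin]
    rw [ENNReal.tsum_mul_right]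
    apply ENNReal.mul_lt_top
    · rw [← ENNReal.ofReal_tsum_of_nonneg ha0 hA]
      exact ENNReal.ofReal_lt_top
    · exact hVlt
  have hkey : ∫⁻ ω, ∑' j, F j ω ∂μ < ⊤ := by
    rw [lintegral_tsum (fun j => (hFmeas j).aemeasurable)]
    exact hsumlin
  have hae : ∀ᵐ ω ∂μ, ∑' j, F j ω < ⊤ :=
    ae_lt_top (by exact Measurable.ennreal_tsum hFmeas) hkey.ne
  filter_upwards [hae] with ω hω
  have hnn : ∀ j, 0 ≤ (c j)^2 * (ζ j ω)^2 * (1 + lam j)^s := fun j =>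
    mul_nonneg (mul_nonneg (sq_nonneg _) (sq_nonneg _)) (Real.rpow_nonneg (hposl j).le s)
  have hcoe : ∀ j, F j ω
      = ((((c j)^2 * (ζ j ω)^2 * (1 + lam j)^s).toNNReal : ℝ≥0) : ℝ≥0∞) := fun j => rfl
  rw [funext fun j => hcoe j] at hω
  have hNN : Summable fun j => ((c j)^2 * (ζ j ω)^2 * (1 + lam j)^s).toNNReal :=
    ENNReal.tsum_coe_ne_top_iff_summable.mp hω.ne
  have := NNReal.summable_coe.mpr hNN
  exact this.congr fun j => Real.coe_toNNReal _ (hnn j)
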